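/- arXiv:1707.05039 — 2 statements merged into one kernel-verified Lean document; each statement's English description precedes it below -/
import Mathlib

section
/- Let C be a Λ-multi-twisted code with constituents C_1,…,C_r, and for 1 ≤ w ≤ r let Θ_w be the tuple of generating idempotents of the minimal constacyclic codes ⟨(x^{m_i}−λ_i)/g_w(x)⟩ (with Θ_{w,i}=0 when g_w ∤ x^{m_i}−λ_i). Then C = ⊕_{w=1}^r ⟨Θ_w⟩ □ C_w, where ⟨Θ_w⟩ □ D denotes the concatenation {(ψ_{w,1}(δ_1),…,ψ_{w,ℓ}(δ_ℓ)) : δ ∈ D} and ψ_{w,i}(γ) = (1/m_i)(Tr_{F_w/F_q}(γ), Tr_{F_w/F_q}(γ α_w^{-1}), …, Tr_{F_w/F_q}(γ α_w^{-(m_i−1)})). -/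
open Polynomial Finset
open scoped Classical

noncomputable instance {F : Type*} [Field F] (f : Polynomial F) :
    Algebra (Polynomial F) (AdjoinRoot f) := Ideal.Quotient.algebra _

/-- Evaluation of an element of `F[x]/⟨p⟩` at the root of `g` in `F_w = F[x]/⟨g⟩`,
defined to be `0` when `g` does not divide `p` (i.e. when `ε_{w,i} = 0`). -/
noncomputable def evalMap {F : Type*} [Field F] (p g : Polynomial F) :
    AdjoinRoot p → AdjoinRoot g :=
  if hd : g ∣ p then
    (AdjoinRoot.liftAlgHom p (Algebra.ofId F (AdjoinRoot g)) (AdjoinRoot.root g) (by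
      have h : aeval (AdjoinRoot.root g) p = 0 := by
        obtain ⟨c, hc⟩ := hd
        rw [hc, map_mul]
        simp [AdjoinRoot.aeval_eq, AdjoinRoot.mk_self]
      exact h) : AdjoinRoot p → AdjoinRoot g)
  else fun _ => 0

/-- The polynomial `∑ j a_j x^j` associated to a coefficient vector. -/
noncomputable def blockPoly {F : Type*} [Field F] {n : ℕ} (a : Fin n → F) : Polynomial F :=
  ∑ j, Polynomial.C (a j) * Polynomial.X ^ (j : ℕ)

open AdjoinRoot

theorem trace_pi {F : Type*} [Field F] {ι : Type*} [Fintype ι] {B : ι → Type*} [∀ i, CommRing (B i)]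
    [∀ i, Algebra F (B i)] {κ : ι → Type*} [∀ i, Fintype (κ i)]
    (b : ∀ i, Module.Basis (κ i) F (B i)) (x : ∀ i, B i) :
    Algebra.trace F (∀ i, B i) x = ∑ i, Algebra.trace F (B i) (x i) := by
  rw [Algebra.trace_eq_matrix_trace (Pi.basis b) x, Matrix.trace]
  rw [← Finset.univ_sigma_univ, Finset.sum_sigma]
  refine Finset.sum_congr rfl fun i _ => ?_
  rw [Algebra.trace_eq_matrix_trace (b i) (x i), Matrix.trace]
  refine Finset.sum_congr rfl fun j _ => ?_
  simp only [Matrix.diag_apply, Algebra.leftMulMatrix_eq_repr_mul, Pi.basis_repr,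
    Pi.basis_apply]
  congr 1
  simp [Pi.mul_apply]


theorem evalMap_eq {F : Type*} [Field F] {p g : Polynomial F} (h : g ∣ p)
    (hz : aeval (AdjoinRoot.root g) p = 0) :
    evalMap p g = (AdjoinRoot.liftAlgHom p (Algebra.ofId F (AdjoinRoot g)) (AdjoinRoot.root g) hz : AdjoinRoot p → AdjoinRoot g) := by
  simp only [evalMap, dif_pos h]

theorem liftAlgHom_ofId_mk {F : Type*} [Field F] {p g : Polynomial F}
    (hz : aeval (AdjoinRoot.root g) p = 0) (f : Polynomial F) :
    AdjoinRoot.liftAlgHom p (Algebra.ofId F (AdjoinRoot g)) (AdjoinRoot.root g) hz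
      (AdjoinRoot.mk p f) = aeval (AdjoinRoot.root g) f := rfl

theorem evalMap_zero {F : Type*} [Field F] {p g : Polynomial F} (h : ¬ g ∣ p) (x : AdjoinRoot p) :
    evalMap p g x = 0 := by simp only [evalMap, dif_neg h]

theorem aeval_root_of_dvd {F : Type*} [Field F] {p g : Polynomial F} (h : g ∣ p) :
    aeval (AdjoinRoot.root g) p = 0 := by
  rw [AdjoinRoot.aeval_eq, AdjoinRoot.mk_eq_zero]; exact h

theorem evalMap_mk {F : Type*} [Field F] {p g : Polynomial F} (h : g ∣ p) (f : Polynomial F) :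
    evalMap p g (AdjoinRoot.mk p f) = AdjoinRoot.mk g f := by
  rw [evalMap_eq h (aeval_root_of_dvd h), liftAlgHom_ofId_mk, AdjoinRoot.aeval_eq]

theorem evalMap_root {F : Type*} [Field F] {p g : Polynomial F} (h : g ∣ p) :
    evalMap p g (AdjoinRoot.root p) = AdjoinRoot.root g := by
  rw [evalMap_eq h (aeval_root_of_dvd h)]; exact AdjoinRoot.liftAlgHom_root ..

theorem evalMap_mul {F : Type*} [Field F] {p g : Polynomial F} (h : g ∣ p) (x y : AdjoinRoot p) :
    evalMap p g (x * y) = evalMap p g x * evalMap p g y := by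
  rw [evalMap_eq h (aeval_root_of_dvd h)]; exact map_mul _ x y

section CRT
variable {F : Type*} [Field F] {r : ℕ} {g : Fin r → Polynomial F}

theorem coprime_of_ne (hirr : ∀ w, Irreducible (g w)) (hmon : ∀ w, (g w).Monic)
    (hdist : Function.Injective g) {w w' : Fin r} (h : w ≠ w') : IsCoprime (g w) (g w') := by
  refine (hirr w).coprime_iff_not_dvd.mpr fun hdvd => h (hdist ?_)
  exact Polynomial.eq_of_monic_of_associated (hmon w) (hmon w')
    ((hirr w).associated_of_dvd (hirr w') hdvd)

theorem trace_adjoinRoot_eq_sum (hirr : ∀ w, Irreducible (g w)) (hmon : ∀ w, (g w).Monic)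
    (hdist : Function.Injective g) (S : Finset (Fin r)) {p : Polynomial F}
    (hp : p = ∏ w ∈ S, g w) (z : AdjoinRoot p) :
    Algebra.trace F (AdjoinRoot p) z
      = ∑ w ∈ S, Algebra.trace F (AdjoinRoot (g w)) (evalMap p (g w) z) := by
  have hgne : ∀ w, g w ≠ 0 := fun w => (hmon w).ne_zero
  have hpne : p ≠ 0 := hp ▸ Finset.prod_ne_zero_iff.mpr fun w _ => hgne w
  have hdvd : ∀ w ∈ S, g w ∣ p := fun w hw => hp ▸ Finset.dvd_prod_of_mem _ hw
  let Φ : AdjoinRoot p →ₐ[F] ∀ w : S, AdjoinRoot (g w.1) :=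
    Pi.algHom _ _ fun w => AdjoinRoot.liftAlgHom p (Algebra.ofId F _) (AdjoinRoot.root (g w.1))
      (aeval_root_of_dvd (hdvd w.1 w.2))
  have hinj : Function.Injective Φ := by
    rw [injective_iff_map_eq_zero]
    intro z hz
    obtain ⟨f, rfl⟩ := AdjoinRoot.mk_surjective z
    rw [AdjoinRoot.mk_eq_zero, hp]
    refine Finset.prod_dvd_of_coprime ?_ fun w hw => ?_
    · intro a ha b hb hab
      exact coprime_of_ne hirr hmon hdist hab
    · have := congrFun hz ⟨w, hw⟩
      simpa only [Φ, Pi.algHom_apply, liftAlgHom_ofId_mk, AdjoinRoot.aeval_eq,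
        Pi.zero_apply, AdjoinRoot.mk_eq_zero] using this
  haveI : ∀ w : S, FiniteDimensional F (AdjoinRoot (g w.1)) := fun w =>
    Module.Basis.finiteDimensional_of_finite (AdjoinRoot.powerBasis (hgne w.1)).basis
  haveI : FiniteDimensional F (AdjoinRoot p) :=
    Module.Basis.finiteDimensional_of_finite (AdjoinRoot.powerBasis hpne).basis
  have hrank : Module.finrank F (AdjoinRoot p)
      = Module.finrank F (∀ w : S, AdjoinRoot (g w.1)) := by
    rw [Module.finrank_pi_fintype]
    have h1 : Module.finrank F (AdjoinRoot p) = p.natDegree := by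
      rw [Module.finrank_eq_card_basis (AdjoinRoot.powerBasis hpne).basis]
      simp [AdjoinRoot.powerBasis]
      exact Fintype.card_fin _
    have h2 : ∀ w : S, Module.finrank F (AdjoinRoot (g w.1)) = (g w.1).natDegree := fun w => by
      rw [Module.finrank_eq_card_basis (AdjoinRoot.powerBasis (hgne w.1)).basis]
      simp [AdjoinRoot.powerBasis]
      exact Fintype.card_fin _
    rw [h1, hp, Polynomial.natDegree_prod _ _ fun w _ => hgne w]
    rw [← Finset.sum_coe_sort S fun w => (g w).natDegree]
    exact Finset.sum_congr rfl fun w _ => (h2 w).symm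
  have hsurj : Function.Surjective Φ := by
    have h := (LinearMap.injective_iff_surjective_of_finrank_eq_finrank
      (f := Φ.toLinearMap) hrank).mp
    exact h hinj
  let e : AdjoinRoot p ≃ₐ[F] ∀ w : S, AdjoinRoot (g w.1) :=
    AlgEquiv.ofBijective Φ ⟨hinj, hsurj⟩
  rw [← Algebra.trace_eq_of_algEquiv e z]
  rw [trace_pi (fun w : S => (AdjoinRoot.powerBasis (hgne w.1)).basis)]
  rw [← Finset.sum_coe_sort S]
  refine Finset.sum_congr rfl fun w _ => ?_
  congr 1
  show Φ z w = _
  rw [evalMap_eq (hdvd w.1 w.2) (aeval_root_of_dvd (hdvd w.1 w.2))]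
  rfl
end CRT


section BP
variable {F : Type*} [Field F] {n : ℕ}

theorem blockPoly_add (a b : Fin n → F) :
    blockPoly (fun j => a j + b j) = blockPoly a + blockPoly b := by
  simp [blockPoly, Finset.sum_add_distrib, add_mul]

theorem blockPoly_smul (c : F) (a : Fin n → F) :
    blockPoly (fun j => c * a j) = C c * blockPoly a := by
  simp [blockPoly, Finset.mul_sum, mul_assoc]

theorem blockPoly_sum {ι : Type*} (s : Finset ι) (a : ι → Fin n → F) :
    blockPoly (fun j => ∑ w ∈ s, a w j) = ∑ w ∈ s, blockPoly (a w) := by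
  unfold blockPoly
  rw [Finset.sum_comm]
  simp [Finset.sum_mul]
end BP

section Pow
variable {F : Type*} [Field F]

theorem root_pow_eq (m : ℕ) (lam : F) :
    (root (X ^ m - C lam : Polynomial F)) ^ m = algebraMap F _ lam := by
  have h : AdjoinRoot.mk (X ^ m - C lam : Polynomial F) (X ^ m - C lam) = 0 :=
    AdjoinRoot.mk_self
  rw [map_sub, sub_eq_zero] at h
  rw [← AdjoinRoot.mk_X, ← map_pow, h, AdjoinRoot.mk_C, AdjoinRoot.algebraMap_eq]

theorem trace_root_pow (m : ℕ) (hm : 0 < m) (lam : F) {t : ℕ} (ht : t < m) :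
    Algebra.trace F (AdjoinRoot (X ^ m - C lam : Polynomial F))
      (root (X ^ m - C lam : Polynomial F) ^ t) = if t = 0 then (m : F) else 0 := by
  have hpne : (X ^ m - C lam : Polynomial F) ≠ 0 := (monic_X_pow_sub_C lam hm.ne').ne_zero
  have hdeg : (X ^ m - C lam : Polynomial F).natDegree = m := natDegree_X_pow_sub_C
  set pb := AdjoinRoot.powerBasis hpne with hpb
  have hdim : pb.dim = m := hdeg
  have hgen : pb.gen = root (X ^ m - C lam : Polynomial F) := rfl
  by_cases ht0 : t = 0
  · subst ht0
    rw [pow_zero, if_pos rfl, ← map_one (algebraMap F (AdjoinRoot (X ^ m - C lam : Polynomial F))),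
      Algebra.trace_algebraMap_of_basis pb.basis]
    simp [hdim]
  · rw [if_neg ht0, Algebra.trace_eq_matrix_trace pb.basis, Matrix.trace]
    refine Finset.sum_eq_zero fun j _ => ?_
    rw [Matrix.diag_apply, Algebra.leftMulMatrix_eq_repr_mul]
    have hj : (j : ℕ) < m := by have h2 := j.isLt; omega
    rw [pb.basis_eq_pow j, hgen, ← pow_add]
    by_cases h : t + (j : ℕ) < m
    · have hb : root (X ^ m - C lam : Polynomial F) ^ (t + (j : ℕ))
          = pb.basis ⟨t + (j : ℕ), by omega⟩ := by rw [pb.basis_eq_pow, hgen]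
      rw [hb, pb.basis.repr_self, Finsupp.single_apply, if_neg]
      intro heq
      have := congrArg Fin.val heq
      simp only [Fin.val_mk] at this
      omega
    · push_neg at h
      have hlt : t + (j : ℕ) - m < m := by omega
      have hsplit : t + (j : ℕ) = m + (t + (j : ℕ) - m) := by omega
      have hb : root (X ^ m - C lam : Polynomial F) ^ (t + (j : ℕ))
          = lam • pb.basis ⟨t + (j : ℕ) - m, by omega⟩ := by
        rw [pb.basis_eq_pow, hgen, Algebra.smul_def, ← root_pow_eq m lam, ← pow_add]
        congr 1
        all_goals try simp only [Fin.val_mk]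
        all_goals omega
      rw [hb, map_smul, Finsupp.smul_apply, pb.basis.repr_self, Finsupp.single_apply,
        if_neg (fun heq => by
          have := congrArg Fin.val heq
          simp only [Fin.val_mk] at this
          omega)]
      simp
end Pow



section LemA
variable {F : Type*} [Field F] {r : ℕ} {g : Fin r → Polynomial F}

theorem evalMap_one {F : Type*} [Field F] {p g : Polynomial F} (h : g ∣ p) :
    evalMap p g 1 = 1 := by
  rw [evalMap_eq h (aeval_root_of_dvd h)]; exact map_one _

theorem evalMap_pow {F : Type*} [Field F] {p g : Polynomial F} (h : g ∣ p) (x : AdjoinRoot p)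
    (n : ℕ) : evalMap p g (x ^ n) = evalMap p g x ^ n := by
  rw [evalMap_eq h (aeval_root_of_dvd h)]; exact map_pow _ x n

set_option maxHeartbeats 2000000 in
theorem lemmaA (hirr : ∀ w, Irreducible (g w)) (hmon : ∀ w, (g w).Monic)
    (hdist : Function.Injective g) (m : ℕ) (hm : 0 < m) (hmF : (m : F) ≠ 0)
    (lam : F) (hlam : lam ≠ 0)
    (hp : (X ^ m - C lam : Polynomial F)
      = ∏ w ∈ univ.filter (fun w => g w ∣ (X ^ m - C lam : Polynomial F)), g w)
    (u : AdjoinRoot (X ^ m - C lam : Polynomial F)) :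
    AdjoinRoot.mk (X ^ m - C lam : Polynomial F) (blockPoly (fun j : Fin m => (m : F)⁻¹ *
      ∑ w, Algebra.trace F (AdjoinRoot (g w))
        (evalMap (X ^ m - C lam : Polynomial F) (g w) u
          * Ring.inverse (root (g w)) ^ (j : ℕ)))) = u := by
  revert u
  have hpne : (X ^ m - C lam : Polynomial F) ≠ 0 := (monic_X_pow_sub_C lam hm.ne').ne_zero
  have hdeg : (X ^ m - C lam : Polynomial F).natDegree = m := natDegree_X_pow_sub_C
  set p : Polynomial F := X ^ m - C lam with hpdef
  intro u
  set ζ : AdjoinRoot p := AdjoinRoot.mk p (C lam⁻¹ * X ^ (m - 1)) with hζdef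
  have hζ : root p * ζ = 1 := by
    rw [hζdef, ← AdjoinRoot.mk_X, ← map_mul]
    have hx : (X : Polynomial F) * (C lam⁻¹ * X ^ (m - 1)) = C lam⁻¹ * X ^ m := by
      rw [mul_left_comm, ← pow_succ']
      congr 2
      omega
    rw [hx, map_mul, map_pow, AdjoinRoot.mk_X, root_pow_eq, AdjoinRoot.mk_C,
      ← AdjoinRoot.algebraMap_eq, ← map_mul, inv_mul_cancel₀ hlam, map_one]
  -- the inverse of the root in each factor
  have hinv : ∀ w, g w ∣ p → Ring.inverse (root (g w)) = evalMap p (g w) ζ := by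
    intro w hw
    have h1 : root (g w) * evalMap p (g w) ζ = 1 := by
      rw [← evalMap_root hw, ← evalMap_mul hw, hζ, evalMap_one hw]
    exact (Ring.inverse_unit (Units.mkOfMulEqOne _ _ h1)).trans rfl
  -- rewrite the coefficient sums as global traces
  have hcoef : ∀ j : ℕ, ∑ w, Algebra.trace F (AdjoinRoot (g w))
      (evalMap p (g w) u * Ring.inverse (root (g w)) ^ j)
      = Algebra.trace F (AdjoinRoot p) (u * ζ ^ j) := by
    intro j
    rw [trace_adjoinRoot_eq_sum hirr hmon hdist _ hp (u * ζ ^ j)]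
    rw [← Finset.sum_subset (Finset.subset_univ
      (univ.filter (fun w => g w ∣ p)))]
    · refine Finset.sum_congr rfl fun w hw => ?_
      have hdv : g w ∣ p := (Finset.mem_filter.mp hw).2
      rw [hinv w hdv, evalMap_mul hdv, evalMap_pow hdv]
    · intro w _ hw
      rw [Finset.mem_filter] at hw
      push_neg at hw
      rw [evalMap_zero (hw (Finset.mem_univ w)), zero_mul, map_zero]
  -- trace of root^k * ζ^j
  have htrk : ∀ k j : ℕ, k < m → j < m →
      Algebra.trace F (AdjoinRoot p) (root p ^ k * ζ ^ j)
        = if j = k then (m : F) else 0 := by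
    intro k j hk hj
    rcases le_or_gt j k with hle | hlt
    · have hsp : root p ^ k * ζ ^ j = root p ^ (k - j) := by
        have h6 : root p ^ k = root p ^ (k - j) * root p ^ j := by
          rw [← pow_add]; congr 1; omega
        rw [h6, mul_assoc, ← mul_pow, hζ, one_pow, mul_one]
      rw [hsp, trace_root_pow m hm lam (by omega)]
      congr 1
      simp only [eq_iff_iff]
      omega
    · have h2 : (lam⁻¹ • root p ^ (m - (j - k))) * root p ^ (j - k) = 1 := by
        rw [smul_mul_assoc, ← pow_add]
        have h3 : m - (j - k) + (j - k) = m := by omega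
        rw [h3, root_pow_eq, Algebra.smul_def, ← map_mul, inv_mul_cancel₀ hlam, map_one]
      have h4 : ζ ^ (j - k) * root p ^ (j - k) = 1 := by
        rw [← mul_pow, mul_comm ζ, hζ, one_pow]
      have h1 : ζ ^ (j - k) = lam⁻¹ • root p ^ (m - (j - k)) := by
        calc ζ ^ (j - k) = ζ ^ (j - k) * ((lam⁻¹ • root p ^ (m - (j - k))) * root p ^ (j - k)) := by
              rw [h2, mul_one]
          _ = (ζ ^ (j - k) * root p ^ (j - k)) * (lam⁻¹ • root p ^ (m - (j - k))) := by ring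
          _ = lam⁻¹ • root p ^ (m - (j - k)) := by rw [h4, one_mul]
      have hsp : root p ^ k * ζ ^ j = ζ ^ (j - k) := by
        have h6 : ζ ^ j = ζ ^ (j - k) * ζ ^ k := by rw [← pow_add]; congr 1; omega
        rw [h6]
        calc root p ^ k * (ζ ^ (j - k) * ζ ^ k)
            = (root p * ζ) ^ k * ζ ^ (j - k) := by rw [mul_pow]; ring
          _ = ζ ^ (j - k) := by rw [hζ, one_pow, one_mul]
      rw [hsp, h1, map_smul, smul_eq_mul, trace_root_pow m hm lam (by omega),
        if_neg (by omega), mul_zero, if_neg (by omega)]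
  -- reduce to a linear algebra statement
  have hdim : (AdjoinRoot.powerBasis hpne).dim = m := hdeg
  have hgoal : ∀ v : AdjoinRoot p, AdjoinRoot.mk p (blockPoly (fun j : Fin m => (m : F)⁻¹ *
      Algebra.trace F (AdjoinRoot p) (v * ζ ^ (j : ℕ)))) = v := by
    intro v
    let T : AdjoinRoot p →ₗ[F] AdjoinRoot p :=
      { toFun := fun v => AdjoinRoot.mk p (blockPoly (fun j : Fin m => (m : F)⁻¹ *
          Algebra.trace F (AdjoinRoot p) (v * ζ ^ (j : ℕ))))
        map_add' := fun x y => by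
          rw [← map_add, ← blockPoly_add]
          exact congrArg _ (congrArg blockPoly (funext fun j => by
            rw [add_mul, map_add, mul_add]))
        map_smul' := fun c x => by
          simp only [RingHom.id_apply]
          show AdjoinRoot.mk p (blockPoly (fun j : Fin m => (m : F)⁻¹ *
              Algebra.trace F (AdjoinRoot p) ((c • x) * ζ ^ (j : ℕ))))
            = c • AdjoinRoot.mk p (blockPoly (fun j : Fin m => (m : F)⁻¹ *
              Algebra.trace F (AdjoinRoot p) (x * ζ ^ (j : ℕ))))
          have h7 : (fun j : Fin m => (m : F)⁻¹ *
              Algebra.trace F (AdjoinRoot p) ((c • x) * ζ ^ (j : ℕ)))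
              = fun j : Fin m => c * ((m : F)⁻¹ *
                Algebra.trace F (AdjoinRoot p) (x * ζ ^ (j : ℕ))) := by
            funext j
            rw [smul_mul_assoc, map_smul, smul_eq_mul, mul_left_comm]
          rw [h7, blockPoly_smul, map_mul, AdjoinRoot.mk_C, ← AdjoinRoot.algebraMap_eq,
            ← Algebra.smul_def] }
    have hT : T = LinearMap.id := by
      apply (AdjoinRoot.powerBasis hpne).basis.ext
      intro k
      have hkm : (k : ℕ) < m := by have h2 := k.isLt; omega
      rw [(AdjoinRoot.powerBasis hpne).basis_eq_pow, LinearMap.id_apply]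
      show AdjoinRoot.mk p (blockPoly (fun j : Fin m => (m : F)⁻¹ *
        Algebra.trace F (AdjoinRoot p)
          ((AdjoinRoot.powerBasis hpne).gen ^ (k : ℕ) * ζ ^ (j : ℕ)))) = _
      have hgen : (AdjoinRoot.powerBasis hpne).gen = root p := rfl
      rw [hgen]
      have hc : (fun j : Fin m => (m : F)⁻¹ *
          Algebra.trace F (AdjoinRoot p) (root p ^ (k : ℕ) * ζ ^ (j : ℕ)))
          = fun j : Fin m => if j = ⟨(k : ℕ), hkm⟩ then (1 : F) else 0 := by
        funext j
        rw [htrk (k : ℕ) (j : ℕ) hkm j.isLt]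
        by_cases hjk : (j : ℕ) = (k : ℕ)
        · rw [if_pos hjk, if_pos (Fin.ext hjk), inv_mul_cancel₀ hmF]
        · rw [if_neg hjk, mul_zero, if_neg (fun h => hjk (congrArg Fin.val h))]
      rw [hc]
      have hb : blockPoly (fun j : Fin m => if j = ⟨(k : ℕ), hkm⟩ then (1 : F) else 0)
          = X ^ (k : ℕ) := by
        unfold blockPoly
        rw [Finset.sum_eq_single (⟨(k : ℕ), hkm⟩ : Fin m)]
        · simp
        · intro b _ hb
          simp [hb]
        · intro h
          exact absurd (Finset.mem_univ _) h
      rw [hb, map_pow, AdjoinRoot.mk_X]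
    have h5 : T v = v := by rw [hT]; rfl
    exact h5
  have h8 : (fun j : Fin m => (m : F)⁻¹ * ∑ w, Algebra.trace F (AdjoinRoot (g w))
      (evalMap p (g w) u * Ring.inverse (root (g w)) ^ (j : ℕ)))
      = fun j : Fin m => (m : F)⁻¹ * Algebra.trace F (AdjoinRoot p) (u * ζ ^ (j : ℕ)) := by
    funext j
    rw [hcoef]
  exact (congrArg (AdjoinRoot.mk p) (congrArg blockPoly h8)).trans (hgoal u)
end LemA


/-- Concatenated structure / trace description of a `Λ`-multi-twisted code: a vector
lies in `C` iff it is `Σ_w ψ_w(δ_w)` for constituents `δ_w ∈ C_w`, where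
`ψ_{w,i}(γ) = (1/m_i)(Tr_{F_w/F_q}(γ), Tr_{F_w/F_q}(γ α_w^{-1}),…,Tr_{F_w/F_q}(γ α_w^{-(m_i−1)}))`,
i.e. `C = ⊕_{w=1}^r ⟨Θ_w⟩ □ C_w`. -/
theorem multiTwisted_concatenated_structure (F : Type*) [Field F] [Fintype F]
    (ℓ r : ℕ) (m : Fin ℓ → ℕ) (hm : ∀ i, 0 < m i)
    (hco : ∀ i, Nat.Coprime (m i) (Fintype.card F))
    (Λ : Fin ℓ → F) (hΛ : ∀ i, Λ i ≠ 0)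
    (g : Fin r → Polynomial F) (hirr : ∀ w, Irreducible (g w))
    (hmon : ∀ w, (g w).Monic) (hdist : Function.Injective g)
    (ε : Fin r → Fin ℓ → ℕ)
    (hε : ∀ w i, ε w i = if g w ∣ (X ^ m i - C (Λ i)) then 1 else 0)
    (hfact : ∀ i, (X : Polynomial F) ^ m i - C (Λ i) = ∏ w, g w ^ ε w i)
    (Ccode : Submodule (Polynomial F)
      (∀ i, AdjoinRoot ((X : Polynomial F) ^ m i - C (Λ i)))) :
    (Ccode : Set (∀ i, AdjoinRoot ((X : Polynomial F) ^ m i - C (Λ i))))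
      = {v | ∃ δ : ∀ w : Fin r, Fin ℓ → AdjoinRoot (g w),
          (∀ w, δ w ∈ (fun (u : ∀ i, AdjoinRoot ((X : Polynomial F) ^ m i - C (Λ i))) =>
              fun i => evalMap (X ^ m i - C (Λ i)) (g w) (u i)) ''
            (Ccode : Set (∀ i, AdjoinRoot ((X : Polynomial F) ^ m i - C (Λ i))))) ∧
          v = fun i => AdjoinRoot.mk ((X : Polynomial F) ^ m i - C (Λ i))
            (blockPoly (fun j : Fin (m i) => (m i : F)⁻¹ *
              ∑ w, Algebra.trace F (AdjoinRoot (g w))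
                (δ w i * Ring.inverse (AdjoinRoot.root (g w)) ^ (j : ℕ))))} := by
  classical
  -- (m i : F) is invertible
  have hm0 : ∀ i, ((m i : F)) ≠ 0 := by
    intro i hcast
    have hdvd : ringChar F ∣ m i := (CharP.cast_eq_zero_iff F (ringChar F) (m i)).mp hcast
    obtain ⟨n, hprime, hcard⟩ := FiniteField.card F (ringChar F)
    have hdvd2 : ringChar F ∣ Fintype.card F := by
      rw [hcard]
      exact dvd_pow_self _ n.pos.ne'
    have h1 : ringChar F ∣ 1 := (hco i) ▸ Nat.dvd_gcd hdvd hdvd2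
    exact hprime.ne_one (Nat.dvd_one.mp h1)
  -- squarefree factorizations
  have hS : ∀ i, ((X : Polynomial F) ^ m i - C (Λ i))
      = ∏ w ∈ univ.filter (fun w => g w ∣ ((X : Polynomial F) ^ m i - C (Λ i))), g w := by
    intro i
    conv_lhs => rw [hfact i]
    rw [Finset.prod_filter]
    refine Finset.prod_congr rfl fun w _ => ?_
    rw [hε w i]
    by_cases h : g w ∣ (X : Polynomial F) ^ m i - C (Λ i)
    · simp [h]
    · simp [h]
  -- CRT idempotent polynomials
  have he : ∀ w : Fin r, ∃ E : Polynomial F, AdjoinRoot.mk (g w) E = 1 ∧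
      ∀ w', w' ≠ w → AdjoinRoot.mk (g w') E = 0 := by
    intro w
    have hcop : IsCoprime (g w) (∏ w' ∈ univ.erase w, g w') :=
      IsCoprime.prod_right fun w' hw' =>
        coprime_of_ne hirr hmon hdist (Finset.ne_of_mem_erase hw').symm
    obtain ⟨a, b, hab⟩ := hcop
    refine ⟨b * ∏ w' ∈ univ.erase w, g w', ?_, ?_⟩
    · rw [show b * ∏ w' ∈ univ.erase w, g w' = 1 - a * g w by linear_combination hab]
      rw [map_sub, map_one, map_mul, AdjoinRoot.mk_self, mul_zero, sub_zero]
    · intro w' hw'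
      rw [AdjoinRoot.mk_eq_zero]
      exact Dvd.dvd.mul_left
        (Finset.dvd_prod_of_mem _ (Finset.mem_erase.mpr ⟨hw', Finset.mem_univ _⟩)) b
  choose e he1 he2 using he
  have hsmul : ∀ (f a : Polynomial F) (x : AdjoinRoot f), a • x = AdjoinRoot.mk f a * x := by
    intro f a x
    rw [Algebra.smul_def]; rfl
  -- key identity
  have hkey : ∀ (i : Fin ℓ) (w : Fin r) (u : AdjoinRoot ((X : Polynomial F) ^ m i - C (Λ i))),
      AdjoinRoot.mk ((X : Polynomial F) ^ m i - C (Λ i))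
        (blockPoly (fun j : Fin (m i) => (m i : F)⁻¹ *
          Algebra.trace F (AdjoinRoot (g w))
            (evalMap ((X : Polynomial F) ^ m i - C (Λ i)) (g w) u
              * Ring.inverse (root (g w)) ^ (j : ℕ))))
      = AdjoinRoot.mk ((X : Polynomial F) ^ m i - C (Λ i)) (e w) * u := by
    intro i w u
    have hA := lemmaA hirr hmon hdist (m i) (hm i) (hm0 i) (Λ i) (hΛ i) (hS i)
      (AdjoinRoot.mk ((X : Polynomial F) ^ m i - C (Λ i)) (e w) * u)
    refine Eq.trans ?_ hA
    refine congrArg _ (congrArg blockPoly (funext fun j => ?_))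
    congr 1
    have hsum : ∑ w', Algebra.trace F (AdjoinRoot (g w'))
        (evalMap ((X : Polynomial F) ^ m i - C (Λ i)) (g w')
          (AdjoinRoot.mk ((X : Polynomial F) ^ m i - C (Λ i)) (e w) * u)
          * Ring.inverse (root (g w')) ^ (j : ℕ))
        = Algebra.trace F (AdjoinRoot (g w))
          (evalMap ((X : Polynomial F) ^ m i - C (Λ i)) (g w) u
            * Ring.inverse (root (g w)) ^ (j : ℕ)) := by
      rw [Finset.sum_eq_single w]
      · by_cases hdv : g w ∣ ((X : Polynomial F) ^ m i - C (Λ i))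
        · rw [evalMap_mul hdv, evalMap_mk hdv, he1 w, one_mul]
        · rw [evalMap_zero hdv, evalMap_zero hdv]
      · intro w' _ hw'
        by_cases hdv : g w' ∣ ((X : Polynomial F) ^ m i - C (Λ i))
        · rw [evalMap_mul hdv, evalMap_mk hdv, he2 w w' hw', zero_mul, zero_mul, map_zero]
        · rw [evalMap_zero hdv, zero_mul, map_zero]
      · intro h; exact absurd (Finset.mem_univ _) h
    rw [hsum]
  -- main set equality
  ext v
  simp only [Set.mem_setOf_eq, SetLike.mem_coe]
  constructor
  · intro hv
    refine ⟨fun w i => evalMap ((X : Polynomial F) ^ m i - C (Λ i)) (g w) (v i),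
      fun w => ⟨v, hv, rfl⟩, ?_⟩
    funext i
    exact (lemmaA hirr hmon hdist (m i) (hm i) (hm0 i) (Λ i) (hΛ i) (hS i) (v i)).symm
  · rintro ⟨δ, hδ, rfl⟩
    choose uu huu hval using hδ
    have hv : (fun i => AdjoinRoot.mk ((X : Polynomial F) ^ m i - C (Λ i))
        (blockPoly (fun j : Fin (m i) => (m i : F)⁻¹ *
          ∑ w, Algebra.trace F (AdjoinRoot (g w))
            (δ w i * Ring.inverse (root (g w)) ^ (j : ℕ)))))
        = ∑ w, e w • uu w := by
      funext i
      rw [Finset.sum_apply]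
      have hδval : ∀ w, δ w i = evalMap ((X : Polynomial F) ^ m i - C (Λ i)) (g w) (uu w i) :=
        fun w => (congrFun (hval w) i).symm
      have h1 : (fun j : Fin (m i) => (m i : F)⁻¹ *
          ∑ w, Algebra.trace F (AdjoinRoot (g w))
            (δ w i * Ring.inverse (root (g w)) ^ (j : ℕ)))
          = fun j : Fin (m i) => ∑ w, ((m i : F)⁻¹ *
            Algebra.trace F (AdjoinRoot (g w))
              (evalMap ((X : Polynomial F) ^ m i - C (Λ i)) (g w) (uu w i)
                * Ring.inverse (root (g w)) ^ (j : ℕ))) := by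
        funext j
        rw [Finset.mul_sum]
        refine Finset.sum_congr rfl fun w _ => by rw [hδval w]
      rw [h1, blockPoly_sum, map_sum]
      refine Finset.sum_congr rfl fun w _ => ?_
      rw [hkey i w (uu w i), Pi.smul_apply, hsmul]
    rw [hv]
    exact Submodule.sum_mem _ fun w _ => Submodule.smul_mem _ _ (huu w)
end

section
/- Let C be a Λ-multi-twisted code with nonzero constituents C_{w_1},…,C_{w_t} of minimum Hamming distances 𝔡_1 ≤ 𝔡_2 ≤ ⋯ ≤ 𝔡_t. For 1 ≤ v ≤ t define 𝔎_v = min over subsets I ⊆ {1,…,ℓ} of size 𝔡_v of Σ_{g∈I} d_min(⟨Θ_{w_1,g}⟩ ⊕ ⋯ ⊕ ⟨Θ_{w_t,g}⟩). Then d_min(C) ≥ min{𝔎_1,…,𝔎_t}. -/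
open Polynomial Finset
open scoped Classical

/-- Hamming weight of a tuple. -/
noncomputable def hWeight {ι : Type*} [Fintype ι] {K : ι → Type*} [∀ i, Zero (K i)]
    (c : ∀ i, K i) : ℕ :=
  (Finset.univ.filter fun i => c i ≠ 0).card

/-- The minimum (Hamming) weight of the nonzero elements of a set `S`
(equal to `0` = `sInf ∅` when `S ⊆ {0}`). -/
noncomputable def dminSet {α : Type*} [Zero α] (wt : α → ℕ) (S : Set α) : ℕ :=
  sInf (wt '' (S \ {0}))

section Aux

variable {F : Type*} [Field F]

lemma blockPoly_coeff {n : ℕ} (b : Fin n → F) (s : Fin n) :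
    (blockPoly b).coeff s = b s := by
  simp only [blockPoly, finset_sum_coeff, coeff_C_mul, coeff_X_pow]
  rw [Finset.sum_eq_single s]
  · simp
  · intro j _ hj
    rw [if_neg, mul_zero]
    exact fun h => hj (Fin.ext h.symm)
  · simp

lemma blockPoly_zero {n : ℕ} : blockPoly (0 : Fin n → F) = 0 := by
  simp [blockPoly]

lemma blockPoly_degree_lt {n : ℕ} (b : Fin n → F) :
    (blockPoly b).degree < (n : WithBot ℕ) := by
  refine lt_of_le_of_lt (degree_sum_le _ _) ((Finset.sup_lt_iff ?_).mpr ?_)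
  · exact WithBot.bot_lt_coe n
  · intro j _
    exact (degree_C_mul_X_pow_le _ _).trans_lt (by exact_mod_cast j.isLt)

lemma evalMap_mk_s19 {p q : Polynomial F} (hd : q ∣ p) (s : Polynomial F) :
    evalMap p q (AdjoinRoot.mk p s) = AdjoinRoot.mk q s := by
  rw [evalMap, dif_pos hd]
  exact (AdjoinRoot.liftAlgHom_mk _ _ _ _ s).trans (AdjoinRoot.aeval_eq s)

lemma evalMap_zero' (p q : Polynomial F) : evalMap p q 0 = 0 := by
  rw [evalMap]
  split
  · exact (AdjoinRoot.liftAlgHom _ _ _ _).map_zero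
  · rfl

lemma key_div {r : ℕ} (g : Fin r → Polynomial F) (hirr : ∀ w, Irreducible (g w))
    (hmon : ∀ w, (g w).Monic) (hdist : Function.Injective g)
    (P : Polynomial F) (ε : Fin r → ℕ) (hfact : P = ∏ w, g w ^ ε w)
    (hε : ∀ w, ε w = if g w ∣ P then 1 else 0) (v : Fin r) (hv : g v ∣ P) :
    (∀ w, w ≠ v → g w ∣ P → g w ∣ P / g v) ∧ ¬ g v ∣ P / g v := by
  have hgne : g v ≠ 0 := (hirr v).ne_zero
  set Q : Polynomial F := ∏ w ∈ Finset.univ.erase v, g w ^ ε w with hQ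
  have hPQ : P = g v * Q := by
    rw [hfact, ← Finset.mul_prod_erase _ _ (Finset.mem_univ v), hε v, if_pos hv, pow_one]
  have hdivQ : P / g v = Q := by
    have h1 : g v * (P / g v) = P := EuclideanDomain.mul_div_cancel' hgne hv
    exact mul_left_cancel₀ hgne (h1.trans hPQ)
  constructor
  · intro w hw hwP
    rw [hdivQ]
    have : g w ^ ε w ∣ Q := Finset.dvd_prod_of_mem _ (Finset.mem_erase.mpr ⟨hw, Finset.mem_univ w⟩)
    rwa [hε w, if_pos hwP, pow_one] at this
  · rw [hdivQ]
    intro hdvd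
    rcases (Prime.dvd_finset_prod_iff (hirr v).prime _).mp hdvd with ⟨w, hwmem, hwd⟩
    have hwv : w ≠ v := (Finset.mem_erase.mp hwmem).1
    by_cases hwP : g w ∣ P
    · rw [hε w, if_pos hwP, pow_one] at hwd
      have heq : g v = g w :=
        Polynomial.eq_of_monic_of_associated (hmon v) (hmon w)
          ((hirr v).associated_of_dvd (hirr w) hwd)
      exact hwv (hdist heq.symm)
    · rw [hε w, if_neg hwP, pow_zero] at hwd
      exact (hirr v).not_isUnit (isUnit_of_dvd_one hwd)

end Aux

lemma sum_modByMonic' {F : Type*} [Field F] {ι : Type*} (s : Finset ι)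
    (q : ι → Polynomial F) (P : Polynomial F) :
    (∑ v ∈ s, q v) %ₘ P = ∑ v ∈ s, (q v %ₘ P) :=
  map_sum (Polynomial.modByMonicHom P) q s

/-- Minimum distance bound for a `Λ`-multi-twisted code `C` from its multilevel
concatenated structure: with nonzero constituents `C_{w_1},…,C_{w_t}` of minimum
distances `𝔡_1 ≤ ⋯ ≤ 𝔡_t`, and
`𝔎_v = min_{|I| = 𝔡_v} Σ_{g ∈ I} d_min(⟨Θ_{w_1,g}⟩ ⊕ ⋯ ⊕ ⟨Θ_{w_t,g}⟩)`,
one has `d_min(C) ≥ min{𝔎_1,…,𝔎_t}`. -/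
theorem multiTwisted_concatenated_distance_bound (F : Type*) [Field F] [Fintype F]
    (ℓ r t : ℕ) (ht : 0 < t) (m : Fin ℓ → ℕ) (hm : ∀ i, 0 < m i)
    (hco : ∀ i, Nat.Coprime (m i) (Fintype.card F))
    (Λ : Fin ℓ → F) (hΛ : ∀ i, Λ i ≠ 0)
    (g : Fin r → Polynomial F) (hirr : ∀ w, Irreducible (g w))
    (hmon : ∀ w, (g w).Monic) (hdist : Function.Injective g)
    (ε : Fin r → Fin ℓ → ℕ)
    (hε : ∀ w i, ε w i = if g w ∣ (X ^ m i - C (Λ i)) then 1 else 0)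
    (hfact : ∀ i, (X : Polynomial F) ^ m i - C (Λ i) = ∏ w, g w ^ ε w i)
    (Ccode : Submodule (Polynomial F)
      (∀ i, AdjoinRoot ((X : Polynomial F) ^ m i - C (Λ i))))
    -- the constituents of `C`
    (Cw : ∀ w : Fin r, Set (Fin ℓ → AdjoinRoot (g w)))
    (hCw : ∀ w, Cw w = (fun (u : ∀ i, AdjoinRoot ((X : Polynomial F) ^ m i - C (Λ i))) =>
        fun i => evalMap (X ^ m i - C (Λ i)) (g w) (u i)) ''
      (Ccode : Set (∀ i, AdjoinRoot ((X : Polynomial F) ^ m i - C (Λ i)))))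
    -- the nonzero constituents are exactly those indexed by `wsel`
    (wsel : Fin t → Fin r) (hwsel : Function.Injective wsel)
    (hzero : ∀ w : Fin r, w ∉ Set.range wsel → Cw w = {0})
    (hnonzero : ∀ v : Fin t, Cw (wsel v) ≠ {0})
    -- the minimum distances `𝔡_1 ≤ ⋯ ≤ 𝔡_t` of the nonzero constituents
    (𝔡 : Fin t → ℕ) (h𝔡 : ∀ v, 𝔡 v = dminSet hWeight (Cw (wsel v)))
    (hsort : Monotone 𝔡)
    -- the minimal constacyclic codes `⟨Θ_{w_v, g}⟩`
    (Mc : ∀ (_ : Fin t) (gdx : Fin ℓ), Set (Fin (m gdx) → F))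
    (hMc : ∀ v gdx, Mc v gdx =
      if g (wsel v) ∣ ((X : Polynomial F) ^ m gdx - C (Λ gdx)) then
        {c | ∃ f : Polynomial F, ∀ s : Fin (m gdx),
          c s = ((((X : Polynomial F) ^ m gdx - C (Λ gdx)) / g (wsel v) * f) %ₘ
              ((X : Polynomial F) ^ m gdx - C (Λ gdx))).coeff s.val}
      else {0})
    -- `d_min(⟨Θ_{w_1,g}⟩ ⊕ ⋯ ⊕ ⟨Θ_{w_t,g}⟩)` for each block index `g`
    (dTheta : Fin ℓ → ℕ)
    (hdTheta : ∀ gdx, dTheta gdx = dminSet hWeight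
      {c : Fin (m gdx) → F | ∃ f : Fin t → (Fin (m gdx) → F),
        (∀ v, f v ∈ Mc v gdx) ∧ c = ∑ v, f v})
    -- the quantities `𝔎_v`
    (𝔎 : Fin t → ℕ)
    (h𝔎 : ∀ v, 𝔎 v = sInf ((fun I : Finset (Fin ℓ) => ∑ gdx ∈ I, dTheta gdx) ''
      {I : Finset (Fin ℓ) | I.card = 𝔡 v})) :
    ∀ a : ∀ i, Fin (m i) → F,
      (fun i => AdjoinRoot.mk ((X : Polynomial F) ^ m i - C (Λ i)) (blockPoly (a i)))
        ∈ Ccode → a ≠ 0 →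
      sInf (Set.range 𝔎) ≤ ∑ i, hWeight (a i) := by
  intro a hmem hane
  classical
  have hPmon : ∀ i : Fin ℓ, ((X : Polynomial F) ^ m i - C (Λ i)).Monic :=
    fun i => monic_X_pow_sub_C _ (hm i).ne'
  have hcopr : ∀ w w' : Fin r, w ≠ w' → IsCoprime (g w) (g w') := by
    intro w w' hne
    refine ((hirr w).coprime_iff_not_dvd).mpr fun hdvd => hne (hdist ?_)
    exact Polynomial.eq_of_monic_of_associated (hmon w) (hmon w')
      ((hirr w).associated_of_dvd (hirr w') hdvd)
  have hPdvd : ∀ (i : Fin ℓ) (z : Polynomial F),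
      (∀ w, g w ∣ ((X : Polynomial F) ^ m i - C (Λ i)) → g w ∣ z) →
      ((X : Polynomial F) ^ m i - C (Λ i)) ∣ z := by
    intro i z hz
    rw [hfact i]
    refine Finset.prod_dvd_of_coprime ?_ ?_
    · intro w _ w' _ hne
      exact (hcopr w w' hne).pow
    · intro w _
      by_cases hdw : g w ∣ ((X : Polynomial F) ^ m i - C (Λ i))
      · rw [hε w i, if_pos hdw, pow_one]; exact hz w hdw
      · rw [hε w i, if_neg hdw, pow_zero]; exact one_dvd _
  have hout : ∀ (i : Fin ℓ) (w : Fin r), w ∉ Set.range wsel →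
      g w ∣ ((X : Polynomial F) ^ m i - C (Λ i)) → g w ∣ blockPoly (a i) := by
    intro i w hwr hdw
    have h1 : (fun j => evalMap ((X : Polynomial F) ^ m j - C (Λ j)) (g w)
        (AdjoinRoot.mk _ (blockPoly (a j)))) ∈ Cw w := by
      rw [hCw]; exact ⟨_, hmem, rfl⟩
    rw [hzero w hwr] at h1
    have h2 := congrFun (Set.eq_of_mem_singleton h1) i
    rw [evalMap_mk_s19 hdw] at h2
    exact AdjoinRoot.mk_eq_zero.mp (by simpa using h2)
  -- decomposition of each block into the minimal constacyclic codes
  have hdecomp : ∀ i : Fin ℓ, a i ∈ {c : Fin (m i) → F | ∃ f : Fin t → (Fin (m i) → F),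
      (∀ v, f v ∈ Mc v i) ∧ c = ∑ v, f v} := by
    intro i
    have hbez : ∀ v : Fin t, ∃ u : Polynomial F,
        g (wsel v) ∣ ((X : Polynomial F) ^ m i - C (Λ i)) →
        g (wsel v) ∣ (((X : Polynomial F) ^ m i - C (Λ i)) / g (wsel v) * u - 1) := by
      intro v
      by_cases hv : g (wsel v) ∣ ((X : Polynomial F) ^ m i - C (Λ i))
      · have hnd := (key_div g hirr hmon hdist _ (fun w => ε w i) (hfact i)
          (fun w => hε w i) (wsel v) hv).2
        obtain ⟨x, y, hxy⟩ := ((hirr (wsel v)).coprime_iff_not_dvd).mpr hnd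
        exact ⟨y, fun _ => ⟨-x, by linear_combination hxy⟩⟩
      · exact ⟨0, fun h => absurd h hv⟩
    choose u hu using hbez
    refine ⟨fun v s => if g (wsel v) ∣ ((X : Polynomial F) ^ m i - C (Λ i)) then
        ((((X : Polynomial F) ^ m i - C (Λ i)) / g (wsel v) * (u v * blockPoly (a i))) %ₘ
          ((X : Polynomial F) ^ m i - C (Λ i))).coeff s else 0, ?_, ?_⟩
    · intro v
      rw [hMc v i]
      by_cases hv : g (wsel v) ∣ ((X : Polynomial F) ^ m i - C (Λ i))
      · rw [if_pos hv]
        exact ⟨u v * blockPoly (a i), fun s => if_pos hv⟩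
      · rw [if_neg hv]
        have : (fun s : Fin (m i) =>
            if g (wsel v) ∣ ((X : Polynomial F) ^ m i - C (Λ i)) then
            ((((X : Polynomial F) ^ m i - C (Λ i)) / g (wsel v) * (u v * blockPoly (a i))) %ₘ
              ((X : Polynomial F) ^ m i - C (Λ i))).coeff s else 0) = 0 := by
          funext s; simp [if_neg hv]
        simp [this]
    · funext s
      rw [Finset.sum_apply, ← Finset.sum_filter, ← finset_sum_coeff, ← sum_modByMonic']
      have hkey : (∑ v ∈ Finset.univ.filter
            (fun v => g (wsel v) ∣ ((X : Polynomial F) ^ m i - C (Λ i))),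
            ((X : Polynomial F) ^ m i - C (Λ i)) / g (wsel v) * (u v * blockPoly (a i))) %ₘ
            ((X : Polynomial F) ^ m i - C (Λ i)) = blockPoly (a i) := by
        have hdvdsub : ((X : Polynomial F) ^ m i - C (Λ i)) ∣
            (∑ v ∈ Finset.univ.filter
              (fun v => g (wsel v) ∣ ((X : Polynomial F) ^ m i - C (Λ i))),
              ((X : Polynomial F) ^ m i - C (Λ i)) / g (wsel v) * (u v * blockPoly (a i))) -
            blockPoly (a i) := by
          apply hPdvd i
          intro w hw
          by_cases hwr : w ∈ Set.range wsel
          · obtain ⟨v₁, rfl⟩ := hwr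
            have hv₁T : v₁ ∈ Finset.univ.filter
                (fun v => g (wsel v) ∣ ((X : Polynomial F) ^ m i - C (Λ i))) :=
              Finset.mem_filter.mpr ⟨Finset.mem_univ _, hw⟩
            rw [← Finset.sum_erase_add _ _ hv₁T, add_sub_assoc]
            refine dvd_add (Finset.dvd_sum ?_) ?_
            · intro v hv
              have hvT := (Finset.mem_filter.mp (Finset.mem_of_mem_erase hv)).2
              have hne : wsel v₁ ≠ wsel v :=
                fun h => (Finset.mem_erase.mp hv).1 (hwsel h.symm)
              exact dvd_mul_of_dvd_left
                ((key_div g hirr hmon hdist _ (fun w => ε w i) (hfact i)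
                  (fun w => hε w i) (wsel v) hvT).1 (wsel v₁) hne hw) _
            · obtain ⟨c, hc⟩ := hu v₁ hw
              exact ⟨c * blockPoly (a i), by linear_combination blockPoly (a i) * hc⟩
          · refine dvd_sub (Finset.dvd_sum ?_) (hout i w hwr hw)
            intro v hv
            have hvT := (Finset.mem_filter.mp hv).2
            have hne : w ≠ wsel v := fun h => hwr ⟨v, h.symm⟩
            exact dvd_mul_of_dvd_left
              ((key_div g hirr hmon hdist _ (fun w => ε w i) (hfact i)
                (fun w => hε w i) (wsel v) hvT).1 w hne hw) _
        rw [modByMonic_eq_of_dvd_sub (hPmon i) hdvdsub]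
        refine (modByMonic_eq_self_iff (hPmon i)).mpr ?_
        rw [degree_X_pow_sub_C (hm i)]
        exact blockPoly_degree_lt _
      rw [hkey, blockPoly_coeff]
  have hdT : ∀ i : Fin ℓ, a i ≠ 0 → dTheta i ≤ hWeight (a i) := by
    intro i hai
    rw [hdTheta i]
    unfold dminSet
    exact Nat.sInf_le ⟨a i, ⟨hdecomp i, by simpa using hai⟩, rfl⟩
  -- find a nonzero projection
  have hex : ∃ v : Fin t, (fun j => evalMap ((X : Polynomial F) ^ m j - C (Λ j)) (g (wsel v))
      (AdjoinRoot.mk _ (blockPoly (a j)))) ≠ 0 := by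
    by_contra hall
    push_neg at hall
    obtain ⟨i₀, hi₀⟩ := Function.ne_iff.mp hane
    have hdvd : ((X : Polynomial F) ^ m i₀ - C (Λ i₀)) ∣ blockPoly (a i₀) := by
      apply hPdvd i₀
      intro w hw
      by_cases hwr : w ∈ Set.range wsel
      · obtain ⟨v, rfl⟩ := hwr
        have h1 := congrFun (hall v) i₀
        rw [evalMap_mk_s19 hw] at h1
        exact AdjoinRoot.mk_eq_zero.mp (by simpa using h1)
      · exact hout i₀ w hwr hw
    have hz : blockPoly (a i₀) = 0 :=
      Polynomial.eq_zero_of_dvd_of_degree_lt hdvd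
        (by rw [degree_X_pow_sub_C (hm i₀)]; exact blockPoly_degree_lt _)
    apply hi₀
    funext s
    have hb := blockPoly_coeff (a i₀) s
    rw [hz] at hb
    simpa using hb.symm
  obtain ⟨v₀, hv₀⟩ := hex
  set π : Fin ℓ → AdjoinRoot (g (wsel v₀)) := fun j =>
    evalMap ((X : Polynomial F) ^ m j - C (Λ j)) (g (wsel v₀))
      (AdjoinRoot.mk _ (blockPoly (a j))) with hπ
  have hπmem : π ∈ Cw (wsel v₀) := by
    rw [hCw]; exact ⟨_, hmem, rfl⟩
  have h𝔡le : 𝔡 v₀ ≤ (Finset.univ.filter fun j => π j ≠ 0).card := by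
    rw [h𝔡 v₀]
    unfold dminSet
    exact Nat.sInf_le ⟨π, ⟨hπmem, by simpa using hv₀⟩, rfl⟩
  obtain ⟨I', hI'sub, hI'card⟩ := Finset.exists_subset_card_eq h𝔡le
  have step1 : 𝔎 v₀ ≤ ∑ j ∈ I', dTheta j := by
    rw [h𝔎 v₀]
    exact Nat.sInf_le ⟨I', hI'card, rfl⟩
  have step2 : ∑ j ∈ I', dTheta j ≤ ∑ j ∈ I', hWeight (a j) := by
    refine Finset.sum_le_sum fun j hj => ?_
    have hπj : π j ≠ 0 := (Finset.mem_filter.mp (hI'sub hj)).2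
    have haj : a j ≠ 0 := by
      intro h0
      apply hπj
      rw [hπ]
      show evalMap ((X : Polynomial F) ^ m j - C (Λ j)) (g (wsel v₀))
        (AdjoinRoot.mk _ (blockPoly (a j))) = 0
      rw [h0, blockPoly_zero, map_zero, evalMap_zero']
    exact hdT j haj
  have step3 : ∑ j ∈ I', hWeight (a j) ≤ ∑ j, hWeight (a j) :=
    Finset.sum_le_sum_of_subset (Finset.subset_univ _)
  exact le_trans (Nat.sInf_le ⟨v₀, rfl⟩) (le_trans step1 (le_trans step2 step3))
end
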